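/- Let n < m, n ≥ 2. The cusp model C : ℝⁿ → ℝᵐ defined by C(y,z) = (y, z³ − 3y₁z, ∫₀ᶻ (s² − y₁)² ds, 0, …, 0), where y = (y₁,…,y_{n−1}), is injective on all of ℝⁿ, and its derivative at a point (y,z) is an injective linear map ℝⁿ → ℝᵐ if and only if z² ≠ y₁. -/

import Mathlib

/-- The cusp (threefold-corner) model `C : ℝⁿ → ℝᵐ`,
`C(y,z) = (y, z³ − 3y₁z, ∫₀ᶻ (s² − y₁)² ds, 0, …, 0)`, where
`y = (y₁, y') ∈ ℝ × ℝ^{n−2}` (so `k = n−2`) and the trailing zeros are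
collected in a Euclidean factor (so `l = m − n − 1`). -/
noncomputable def Cmap (k l : ℕ) (p : (ℝ × EuclideanSpace ℝ (Fin k)) × ℝ) :
    (ℝ × EuclideanSpace ℝ (Fin k)) × ℝ × ℝ × EuclideanSpace ℝ (Fin l) :=
  (p.1, p.2^3 - 3*p.1.1*p.2, ∫ s in (0:ℝ)..p.2, (s^2 - p.1.1)^2, 0)


lemma integral_eval (y z : ℝ) :
    (∫ s in (0:ℝ)..z, (s^2 - y)^2) = z^5/5 - 2/3*y*z^3 + y^2*z := by
  have h : ∀ x ∈ Set.uIcc (0:ℝ) z,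
      HasDerivAt (fun t : ℝ => t^5/5 - 2/3*y*t^3 + y^2*t) ((x^2 - y)^2) x := by
    intro x _
    have : HasDerivAt (fun t : ℝ => t^5/5 - 2/3*y*t^3 + y^2*t)
        ((5*x^4)/5 - 2/3*y*(3*x^2) + y^2*1) x := by
      have h1 : HasDerivAt (fun t : ℝ => t^5) (5*x^4) x := by
        simpa using (hasDerivAt_pow 5 x)
      have h2 : HasDerivAt (fun t : ℝ => t^3) (3*x^2) x := by
        simpa using (hasDerivAt_pow 3 x)
      have h3 : HasDerivAt (fun t : ℝ => t) 1 x := hasDerivAt_id x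
      exact ((h1.div_const 5).sub ((h2.const_mul (2/3*y)))).add (h3.const_mul (y^2))
    convert this using 1
    ring
  rw [intervalIntegral.integral_eq_sub_of_hasDerivAt h
    ((Continuous.intervalIntegrable (by continuity) _ _))]
  ring

lemma Cmap_eq (k l : ℕ) : Cmap k l = fun p =>
    (p.1, p.2*p.2*p.2 - 3*p.1.1*p.2,
      p.2*p.2*p.2*p.2*p.2*(1/5) - 2/3*p.1.1*(p.2*p.2*p.2) + p.1.1*p.1.1*p.2, 0) := by
  funext p
  simp only [Cmap, integral_eval, Prod.mk.injEq]
  refine ⟨trivial, by ring, by ring, trivial⟩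

section deriv

variable (k l : ℕ)

noncomputable def Umap : ((ℝ × EuclideanSpace ℝ (Fin k)) × ℝ) →L[ℝ] ℝ :=
  (ContinuousLinearMap.fst ℝ ℝ (EuclideanSpace ℝ (Fin k))).comp
    (ContinuousLinearMap.fst ℝ (ℝ × EuclideanSpace ℝ (Fin k)) ℝ)

noncomputable def Wmap : ((ℝ × EuclideanSpace ℝ (Fin k)) × ℝ) →L[ℝ] ℝ :=
  ContinuousLinearMap.snd ℝ (ℝ × EuclideanSpace ℝ (Fin k)) ℝ

noncomputable def Lmap (y z : ℝ) :
    ((ℝ × EuclideanSpace ℝ (Fin k)) × ℝ) →L[ℝ]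
      ((ℝ × EuclideanSpace ℝ (Fin k)) × ℝ × ℝ × EuclideanSpace ℝ (Fin l)) :=
  (ContinuousLinearMap.fst ℝ (ℝ × EuclideanSpace ℝ (Fin k)) ℝ).prod
    ((((-3*z) • Umap k + (3*z^2 - 3*y) • Wmap k).prod
      (((-(2/3)*z^3 + 2*y*z) • Umap k + ((z^2 - y)^2) • Wmap k).prod 0)))

lemma Lmap_apply (y z : ℝ) (v : (ℝ × EuclideanSpace ℝ (Fin k)) × ℝ) :
    Lmap k l y z v = (v.1, (-3*z)*v.1.1 + (3*z^2-3*y)*v.2,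
      ((-(2/3)*z^3 + 2*y*z))*v.1.1 + ((z^2-y)^2)*v.2, 0) := by
  simp [Lmap, Umap, Wmap]

lemma hasFDerivAt_Cmap (p : (ℝ × EuclideanSpace ℝ (Fin k)) × ℝ) :
    HasFDerivAt (Cmap k l) (Lmap k l p.1.1 p.2) p := by
  rw [Cmap_eq]
  have hU : HasFDerivAt (fun q : (ℝ × EuclideanSpace ℝ (Fin k)) × ℝ => q.1.1)
      (Umap k) p := (Umap k).hasFDerivAt
  have hW : HasFDerivAt (fun q : (ℝ × EuclideanSpace ℝ (Fin k)) × ℝ => q.2)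
      (Wmap k) p := (Wmap k).hasFDerivAt
  have h2 : HasFDerivAt (fun q : (ℝ × EuclideanSpace ℝ (Fin k)) × ℝ =>
      q.2*q.2*q.2 - 3*q.1.1*q.2)
      ((-3*p.2) • Umap k + (3*p.2^2 - 3*p.1.1) • Wmap k) p := by
    have := ((hW.mul hW).mul hW).sub (((hU.const_mul 3)).mul hW)
    refine this.congr_fderiv ?_
    refine ContinuousLinearMap.ext fun v => ?_
    simp only [ContinuousLinearMap.add_apply, ContinuousLinearMap.coe_smul',
      Pi.smul_apply, ContinuousLinearMap.coe_comp', Function.comp_apply,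
      ContinuousLinearMap.coe_fst', ContinuousLinearMap.coe_snd', smul_eq_mul,
      ContinuousLinearMap.coe_sub', Pi.sub_apply, Pi.mul_apply, Pi.pow_apply, Umap, Wmap]
    ring
  have h3 : HasFDerivAt (fun q : (ℝ × EuclideanSpace ℝ (Fin k)) × ℝ =>
      q.2*q.2*q.2*q.2*q.2*(1/5) - 2/3*q.1.1*(q.2*q.2*q.2) + q.1.1*q.1.1*q.2)
      ((-(2/3)*p.2^3 + 2*p.1.1*p.2) • Umap k + ((p.2^2 - p.1.1)^2) • Wmap k) p := by
    have := (((((hW.mul hW).mul hW).mul hW).mul hW).mul_const (1/5)).sub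
      (((hU.const_mul (2/3))).mul ((hW.mul hW).mul hW)) |>.add ((hU.mul hU).mul hW)
    refine this.congr_fderiv ?_
    refine ContinuousLinearMap.ext fun v => ?_
    simp only [ContinuousLinearMap.add_apply, ContinuousLinearMap.coe_smul',
      Pi.smul_apply, ContinuousLinearMap.coe_comp', Function.comp_apply,
      ContinuousLinearMap.coe_fst', ContinuousLinearMap.coe_snd', smul_eq_mul,
      ContinuousLinearMap.coe_sub', Pi.sub_apply, Pi.mul_apply, Pi.pow_apply, Umap, Wmap]
    ring
  exact HasFDerivAt.prodMk hasFDerivAt_fst (HasFDerivAt.prodMk h2 (HasFDerivAt.prodMk h3 (hasFDerivAt_const 0 p)))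

end deriv

lemma key_inj (y a b : ℝ)
    (h2 : a*a*a - 3*y*a = b*b*b - 3*y*b)
    (h3 : a*a*a*a*a*(1/5) - 2/3*y*(a*a*a) + y*y*a
        = b*b*b*b*b*(1/5) - 2/3*y*(b*b*b) + y*y*b) : a = b := by
  by_contra hne
  have hd : a - b ≠ 0 := sub_ne_zero.mpr hne
  have hy : a^2 + a*b + b^2 - 3*y = 0 := by
    have h : (a-b)*(a^2+a*b+b^2-3*y) = 0 := by linear_combination h2
    exact (mul_eq_zero.mp h).resolve_left hd
  have h5 : (a-b)^3*(4*a^2+7*a*b+4*b^2) = 0 := by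
    linear_combination 45*h3 - 5*(a-b)*(a^2+a*b+b^2-3*y)*hy
  have h6 : 4*a^2+7*a*b+4*b^2 = 0 :=
    (mul_eq_zero.mp h5).resolve_left (pow_ne_zero 3 hd)
  have hpos : 0 < (a-b)^2 := lt_of_le_of_ne (sq_nonneg _) (Ne.symm (pow_ne_zero 2 hd))
  nlinarith [sq_nonneg (a+b), hpos]

/-- For `2 ≤ n < m`, the cusp model `C` is injective on all of `ℝⁿ`, and its
derivative at `(y,z)` is an injective linear map iff `z² ≠ y₁`. -/
theorem Cmap_injective_and_fderiv_injective_iff (n m : ℕ) (hn : 2 ≤ n) (hnm : n < m) :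
    Function.Injective (Cmap (n - 2) (m - n - 1)) ∧
    ∀ p : (ℝ × EuclideanSpace ℝ (Fin (n - 2))) × ℝ,
      (Function.Injective ⇑(fderiv ℝ (Cmap (n - 2) (m - n - 1)) p) ↔
        p.2^2 ≠ p.1.1) := by
  set k := n - 2
  set l := m - n - 1
  constructor
  · intro p q h
    rw [Cmap_eq] at h
    simp only [Prod.mk.injEq] at h
    obtain ⟨h1, h2, h3, -⟩ := h
    rw [h1] at h2 h3
    exact Prod.ext h1 (key_inj q.1.1 p.2 q.2 h2 h3)
  · intro p
    rw [(hasFDerivAt_Cmap k l p).fderiv]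
    constructor
    · intro hinj h
      have h0 : Lmap k l p.1.1 p.2 (((0:ℝ), (0:EuclideanSpace ℝ (Fin k))), (1:ℝ))
          = Lmap k l p.1.1 p.2 0 := by
        rw [map_zero, Lmap_apply]
        simp [h, Prod.mk_eq_zero]
      have := hinj h0
      simp [Prod.mk_eq_zero] at this
    · intro hne v w hvw
      have hker : Lmap k l p.1.1 p.2 (v - w) = 0 := by
        rw [map_sub, hvw, sub_self]
      rw [Lmap_apply] at hker
      simp only [Prod.mk_eq_zero] at hker
      obtain ⟨e1, e2, e3, -⟩ := hker
      have e11 : (v - w).1.1 = 0 := by rw [e1]; rfl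
      rw [e11] at e3
      have hz : (p.2^2 - p.1.1)^2 ≠ 0 := pow_ne_zero 2 (sub_ne_zero.mpr hne)
      have e4 : (v - w).2 = 0 := by
        have : (p.2^2 - p.1.1)^2 * (v - w).2 = 0 := by linear_combination e3
        exact (mul_eq_zero.mp this).resolve_left hz
      have : v - w = 0 := Prod.ext e1 e4
      exact sub_eq_zero.mp this
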